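/- Let X* ∈ F. Then X* satisfies the first-order optimality condition ⟨∇f(X*) | X − X*⟩ ≥ 0 for every X ∈ F if and only if ‖D(X*)‖_F = 0, i.e. D(X*) = O. -/

import Mathlib

set_option autoImplicit false

open Matrix Set Filter

attribute [local instance] Matrix.normedAddCommGroup Matrix.normedSpace

namespace BoxSDP

open scoped Classical

/-- Trace inner product `⟨A|B⟩ = Trace(Aᵀ B)`. -/
noncomputable def mip {m k : Type*} [Fintype m] [Fintype k]
    (A B : Matrix m k ℝ) : ℝ :=
  (Aᵀ * B).trace

/-- Frobenius norm `‖A‖_F = √⟨A|A⟩`. -/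
noncomputable def fnorm {m k : Type*} [Fintype m] [Fintype k]
    (A : Matrix m k ℝ) : ℝ :=
  Real.sqrt (mip A A)

/-- The feasible set `F = {X : O ⪯ X ⪯ I}` (membership forces symmetry). -/
def Feas (n : ℕ) : Set (Matrix (Fin n) (Fin n) ℝ) :=
  {X | X.PosSemidef ∧ (1 - X).PosSemidef}

/-- Square root of a positive semidefinite matrix (junk value `0` otherwise);
agrees with `A^{1/2} = Q K^{1/2} Qᵀ` on positive semidefinite matrices. -/
noncomputable def psqrt {m : Type*} [Fintype m] [DecidableEq m]
    (A : Matrix m m ℝ) : Matrix m m ℝ :=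
  if h : A.PosSemidef then
    (h.1.eigenvectorUnitary : Matrix m m ℝ) *
      Matrix.diagonal ((↑) ∘ (√·) ∘ h.1.eigenvalues) *
      (star h.1.eigenvectorUnitary : Matrix m m ℝ)
  else 0

/-- Fourth root `A^{1/4}` of a positive semidefinite matrix. -/
noncomputable def proot4 {m : Type*} [Fintype m] [DecidableEq m]
    (A : Matrix m m ℝ) : Matrix m m ℝ :=
  psqrt (psqrt A)

/-- The 2-norm of a symmetric matrix: its largest absolute eigenvalue. -/
noncomputable def norm2 {m : Type*} [Fintype m] [DecidableEq m]
    (A : Matrix m m ℝ) : ℝ :=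
  if h : A.IsHermitian then sSup (Set.range fun i => |h.eigenvalues i|) else 0

/-- The linear functional `H ↦ ⟨G|H⟩`, as a continuous linear map; a function
`f` has gradient matrix `G` at `X` iff `HasFDerivAt f (gradCLM G) X`. -/
noncomputable def gradCLM {n : ℕ} (G : Matrix (Fin n) (Fin n) ℝ) :
    Matrix (Fin n) (Fin n) ℝ →L[ℝ] ℝ :=
  LinearMap.toContinuousLinearMap
    { toFun := fun H => mip G H
      map_add' := fun x y => by
        simp [mip, Matrix.mul_add]
      map_smul' := fun c x => by
        simp [mip, Matrix.mul_smul] }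

/-- The Hessian bilinear form `⟨A | ∇²f(X) | B⟩` induced by the derivative
`hessOp` of the gradient map. -/
noncomputable def hform {n : ℕ}
    (hessOp : Matrix (Fin n) (Fin n) ℝ →L[ℝ] Matrix (Fin n) (Fin n) ℝ)
    (A B : Matrix (Fin n) (Fin n) ℝ) : ℝ :=
  mip A (hessOp B)

/-- `underline-f`: the minimum of `⟨G | Y − X̂⟩` over `Y ∈ F`. -/
noncomputable def underf {n : ℕ} (G Xh : Matrix (Fin n) (Fin n) ℝ) : ℝ :=
  sInf ((fun Y => mip G (Y - Xh)) '' Feas n)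

/-- First-order optimality condition at `Xs` for gradient matrix `G`. -/
def FirstOrderOpt {n : ℕ} (G Xs : Matrix (Fin n) (Fin n) ℝ) : Prop :=
  ∀ X ∈ Feas n, 0 ≤ mip G (X - Xs)

/-- A fixed eigenvalue decomposition `G = P Γ Pᵀ` of a symmetric matrix `G`,
with eigenvalues in descending order, split into the block `Pp, gp` of
positive eigenvalues and the block `Pm, gm` of nonpositive eigenvalues. -/
structure SpecDecomp (n : ℕ) (G : Matrix (Fin n) (Fin n) ℝ) where
  np : ℕ
  nm : ℕ
  hdim : np + nm = n
  Pp : Matrix (Fin n) (Fin np) ℝ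
  Pm : Matrix (Fin n) (Fin nm) ℝ
  gp : Fin np → ℝ
  gm : Fin nm → ℝ
  hgp_pos : ∀ i, 0 < gp i
  hgm_nonpos : ∀ j, gm j ≤ 0
  hgp_anti : ∀ i j : Fin np, i ≤ j → gp j ≤ gp i
  hgm_anti : ∀ i j : Fin nm, i ≤ j → gm j ≤ gm i
  hPp_orth : Ppᵀ * Pp = 1
  hPm_orth : Pmᵀ * Pm = 1
  hPpPm : Ppᵀ * Pm = 0
  hPPT : Pp * Ppᵀ + Pm * Pmᵀ = 1
  hG : G = Pp * Matrix.diagonal gp * Ppᵀ + Pm * Matrix.diagonal gm * Pmᵀ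

namespace SpecDecomp

variable {n : ℕ} {G : Matrix (Fin n) (Fin n) ℝ}

/-- `V₊(X) = P₊ᵀ X P₊`. -/
def Vp (sd : SpecDecomp n G) (X : Matrix (Fin n) (Fin n) ℝ) :
    Matrix (Fin sd.np) (Fin sd.np) ℝ :=
  sd.Ppᵀ * X * sd.Pp

/-- `V₋(X) = P₋ᵀ (I − X) P₋`. -/
def Vm (sd : SpecDecomp n G) (X : Matrix (Fin n) (Fin n) ℝ) :
    Matrix (Fin sd.nm) (Fin sd.nm) ℝ :=
  sd.Pmᵀ * (1 - X) * sd.Pm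

/-- The search direction `D(X) = P M Pᵀ` with blocks
`M₁₁ = V₊^{1/2} Γ₊ V₊^{1/2}`, `M₁₂ = γ_max P₊ᵀ X P₋`,
`M₂₁ = γ_max P₋ᵀ X P₊`, `M₂₂ = V₋^{1/2} Γ₋ V₋^{1/2}`. -/
noncomputable def Dmat (sd : SpecDecomp n G) (X : Matrix (Fin n) (Fin n) ℝ) :
    Matrix (Fin n) (Fin n) ℝ :=
  sd.Pp * (psqrt (sd.Vp X) * Matrix.diagonal sd.gp * psqrt (sd.Vp X)) * sd.Ppᵀ
    + norm2 G • (sd.Pp * (sd.Ppᵀ * X * sd.Pm) * sd.Pmᵀ)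
    + norm2 G • (sd.Pm * (sd.Pmᵀ * X * sd.Pp) * sd.Ppᵀ)
    + sd.Pm * (psqrt (sd.Vm X) * Matrix.diagonal sd.gm * psqrt (sd.Vm X)) * sd.Pmᵀ

/-- `N(X) = ⟨G | D(X)⟩`. -/
noncomputable def Nval (sd : SpecDecomp n G) (X : Matrix (Fin n) (Fin n) ℝ) : ℝ :=
  mip G (sd.Dmat X)

end SpecDecomp


section Helpers

variable {m k : Type*} [Fintype m] [DecidableEq m] [Fintype k] [DecidableEq k]

lemma real_conjT {l : Type*} (A : Matrix l m ℝ) : Aᴴ = Aᵀ :=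
  conjTranspose_eq_transpose_of_trivial A

lemma psqrt_eq {A : Matrix m m ℝ} (hA : A.PosSemidef) :
    psqrt A = (hA.1.eigenvectorUnitary : Matrix m m ℝ) *
      Matrix.diagonal ((↑) ∘ (√·) ∘ hA.1.eigenvalues) *
      (star hA.1.eigenvectorUnitary : Matrix m m ℝ) := by
  rw [psqrt, dif_pos hA]

lemma psqrt_psd_aux {A : Matrix m m ℝ} (hA : A.PosSemidef) : (psqrt A).PosSemidef := by
  rw [psqrt_eq hA]
  have hd : (Matrix.diagonal ((↑) ∘ (√·) ∘ hA.1.eigenvalues : m → ℝ)).PosSemidef :=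
    posSemidef_diagonal_iff.mpr fun i => by simp [Real.sqrt_nonneg]
  simpa [Unitary.coe_star, Matrix.star_eq_conjTranspose] using
    hd.mul_mul_conjTranspose_same (hA.1.eigenvectorUnitary : Matrix m m ℝ)

lemma psqrt_mul_self_aux {A : Matrix m m ℝ} (hA : A.PosSemidef) : psqrt A * psqrt A = A := by
  rw [psqrt_eq hA]
  conv_rhs => rw [hA.1.spectral_theorem, Unitary.conjStarAlgAut_apply]
  have hU : (star hA.1.eigenvectorUnitary : Matrix m m ℝ) *
      (hA.1.eigenvectorUnitary : Matrix m m ℝ) = 1 := Unitary.coe_star_mul_self _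
  calc _ = (hA.1.eigenvectorUnitary : Matrix m m ℝ) *
        (Matrix.diagonal ((↑) ∘ (√·) ∘ hA.1.eigenvalues) *
          ((star hA.1.eigenvectorUnitary : Matrix m m ℝ) *
            (hA.1.eigenvectorUnitary : Matrix m m ℝ)) *
          Matrix.diagonal ((↑) ∘ (√·) ∘ hA.1.eigenvalues)) *
        (star hA.1.eigenvectorUnitary : Matrix m m ℝ) := by
          simp only [Matrix.mul_assoc]
    _ = _ := by
      rw [hU, Matrix.mul_one, Matrix.diagonal_mul_diagonal]
      congr 2
      congr 1
      funext i
      simp [Real.mul_self_sqrt (hA.eigenvalues_nonneg i)]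

lemma posSemidef_iff_eq_transpose_mul_self {A : Matrix m m ℝ} :
    A.PosSemidef ↔ ∃ B : Matrix m m ℝ, A = Bᴴ * B := by
  constructor
  · intro hA
    refine ⟨psqrt A, ?_⟩
    rw [(psqrt_psd_aux hA).1.eq, psqrt_mul_self_aux hA]
  · rintro ⟨B, rfl⟩
    exact posSemidef_conjTranspose_mul_self B

omit [DecidableEq m] in
lemma psd_diag_nonneg {A : Matrix m m ℝ} (hA : A.PosSemidef) (i : m) : 0 ≤ A i i := by
  simpa [Matrix.mulVec_single, single_dotProduct] using hA.2 (Finsupp.single i 1)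

omit [DecidableEq m] in
lemma trace_psd_nonneg {A : Matrix m m ℝ} (hA : A.PosSemidef) : 0 ≤ A.trace :=
  Finset.sum_nonneg fun i _ => psd_diag_nonneg hA i

lemma psd_trace_zero {A : Matrix m m ℝ} (hA : A.PosSemidef) (h : A.trace = 0) : A = 0 := by
  obtain ⟨B, rfl⟩ := posSemidef_iff_eq_transpose_mul_self.mp hA
  have h' : ∑ j, ∑ i, B i j * B i j = 0 := by
    simpa [Matrix.trace, Matrix.diag, Matrix.mul_apply, Matrix.conjTranspose_apply] using h
  have hB : B = 0 := by
    ext i j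
    have h1 := (Finset.sum_eq_zero_iff_of_nonneg
      (fun j _ => Finset.sum_nonneg fun i _ => mul_self_nonneg (B i j))).mp h' j (Finset.mem_univ j)
    have h2 := (Finset.sum_eq_zero_iff_of_nonneg
      (fun i _ => mul_self_nonneg (B i j))).mp h1 i (Finset.mem_univ i)
    simpa using mul_self_eq_zero.mp h2
  simp [hB]

lemma trace_psd_mul_nonneg {N C : Matrix m m ℝ} (hN : N.PosSemidef) (hC : C.PosSemidef) :
    0 ≤ (N * C).trace := by
  obtain ⟨R, rfl⟩ := posSemidef_iff_eq_transpose_mul_self.mp hN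
  rw [Matrix.mul_assoc, Matrix.trace_mul_comm]
  exact trace_psd_nonneg (by simpa [Matrix.mul_assoc] using hC.mul_mul_conjTranspose_same R)

lemma sandwich_zero {S N : Matrix m m ℝ} (hS : S.PosSemidef) (hN : N.PosSemidef)
    (h : (N * (S * S)).trace = 0) : S * N * S = 0 := by
  apply psd_trace_zero
  · have := hN.mul_mul_conjTranspose_same S
    rwa [hS.isHermitian.eq] at this
  · rw [Matrix.trace_mul_comm (S * N) S, ← Matrix.mul_assoc, Matrix.trace_mul_comm (S * S) N]
    exact h

lemma mul_eq_zero_of_conj_zero {X : Matrix m m ℝ} (hX : X.PosSemidef)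
    (P : Matrix m k ℝ) (h : Pᵀ * X * P = 0) : X * P = 0 := by
  obtain ⟨C, rfl⟩ := posSemidef_iff_eq_transpose_mul_self.mp hX
  have h1 : (C * P)ᴴ * (C * P) = 0 := by
    rw [conjTranspose_mul, real_conjT P]
    calc Pᵀ * Cᴴ * (C * P) = Pᵀ * (Cᴴ * C) * P := by
          simp only [Matrix.mul_assoc]
      _ = 0 := h
  have h2 := conjTranspose_mul_self_eq_zero.mp h1
  rw [Matrix.mul_assoc, h2, Matrix.mul_zero]

lemma trace_diag_mul (d : m → ℝ) (A : Matrix m m ℝ) :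
    (Matrix.diagonal d * A).trace = ∑ i, d i * A i i := by
  simp [Matrix.trace, Matrix.diag, Matrix.diagonal_mul]

lemma mulmul3 {n a b p q : Type*} [Fintype n] [Fintype a] [Fintype b]
    (E : Matrix p n ℝ) (L : Matrix n a ℝ) (M : Matrix a b ℝ) (R : Matrix b n ℝ)
    (S : Matrix n q ℝ) :
    E * (L * M * R) * S = (E * L) * M * (R * S) := by
  simp only [Matrix.mul_assoc]

lemma psqrt_psd {A : Matrix m m ℝ} (hA : A.PosSemidef) : (psqrt A).PosSemidef := by
  exact psqrt_psd_aux hA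

lemma psqrt_mul_self {A : Matrix m m ℝ} (hA : A.PosSemidef) : psqrt A * psqrt A = A := by
  exact psqrt_mul_self_aux hA

lemma psqrt_zero : psqrt (0 : Matrix m m ℝ) = 0 := by
  rw [psqrt, dif_pos Matrix.PosSemidef.zero]
  have h0 := (Matrix.PosSemidef.zero (n := m) (R := ℝ)).1.eigenvalues_eq_zero_iff.mpr rfl
  simp [h0]

end Helpers

theorem first_order_iff_Dmat_eq_zero {n : ℕ}
    (f : Matrix (Fin n) (Fin n) ℝ → ℝ)
    (grad : Matrix (Fin n) (Fin n) ℝ → Matrix (Fin n) (Fin n) ℝ)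
    (hgradsym : ∀ X ∈ Feas n, (grad X).IsSymm)
    (hgrad : ∀ X ∈ Feas n, HasFDerivAt f (gradCLM (grad X)) X)
    (Xs : Matrix (Fin n) (Fin n) ℝ) (hXs : Xs ∈ Feas n)
    (sd : SpecDecomp n (grad Xs)) :
    FirstOrderOpt (grad Xs) Xs ↔ (fnorm (sd.Dmat Xs) = 0 ∧ sd.Dmat Xs = 0) := by
  obtain ⟨hXpsd, hXcpsd⟩ := hXs
  have hGsymm : (grad Xs)ᵀ = grad Xs := hgradsym Xs ⟨hXpsd, hXcpsd⟩
  have hPmtPp : sd.Pmᵀ * sd.Pp = 0 := by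
    have := congrArg Matrix.transpose sd.hPpPm
    simpa [Matrix.transpose_mul] using this
  -- abbreviations
  set Γp := Matrix.diagonal sd.gp with hΓp
  set Γm := Matrix.diagonal sd.gm with hΓm
  have hGppsd : Γp.PosSemidef := posSemidef_diagonal_iff.mpr fun i => (sd.hgp_pos i).le
  have hNm : (Matrix.diagonal (-sd.gm)).PosSemidef :=
    posSemidef_diagonal_iff.mpr fun j => by
      simpa using neg_nonneg.mpr (sd.hgm_nonpos j)
  have hdiagneg : Matrix.diagonal (-sd.gm) = -Γm := by
    rw [hΓm]
    ext i j
    by_cases h : i = j <;> simp [Matrix.diagonal_apply, h]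
  have hVpPsd : ∀ X : Matrix (Fin n) (Fin n) ℝ, X.PosSemidef → (sd.Vp X).PosSemidef := by
    intro X hX
    have := hX.conjTranspose_mul_mul_same sd.Pp
    rwa [real_conjT] at this
  have hVmPsd : ∀ X : Matrix (Fin n) (Fin n) ℝ, (1 - X).PosSemidef → (sd.Vm X).PosSemidef := by
    intro X hX
    have := hX.conjTranspose_mul_mul_same sd.Pm
    rwa [real_conjT] at this
  have hApsd : (sd.Vp Xs).PosSemidef := hVpPsd Xs hXpsd
  have hBpsd : (sd.Vm Xs).PosSemidef := hVmPsd Xs hXcpsd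
  -- trace formula
  have hPmXPm : ∀ X : Matrix (Fin n) (Fin n) ℝ, sd.Pmᵀ * X * sd.Pm = 1 - sd.Vm X := by
    intro X
    have h1 : sd.Pmᵀ * (1 - X) * sd.Pm = sd.Pmᵀ * sd.Pm - sd.Pmᵀ * X * sd.Pm := by
      rw [Matrix.mul_sub, Matrix.mul_one, Matrix.sub_mul]
    show sd.Pmᵀ * X * sd.Pm = 1 - sd.Pmᵀ * (1 - X) * sd.Pm
    rw [h1, sd.hPm_orth]
    abel
  have trG : ∀ X : Matrix (Fin n) (Fin n) ℝ,
      (grad Xs * X).trace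
        = (Γp * sd.Vp X).trace + Γm.trace - (Γm * sd.Vm X).trace := by
    intro X
    conv_lhs => rw [sd.hG]
    rw [Matrix.add_mul, Matrix.trace_add]
    have h1 : (sd.Pp * Γp * sd.Ppᵀ * X).trace = (Γp * sd.Vp X).trace := by
      rw [Matrix.mul_assoc (sd.Pp * Γp), Matrix.trace_mul_cycle sd.Pp Γp (sd.Ppᵀ * X),
        Matrix.trace_mul_comm]
      rfl
    have h2 : (sd.Pm * Γm * sd.Pmᵀ * X).trace = Γm.trace - (Γm * sd.Vm X).trace := by
      rw [Matrix.mul_assoc (sd.Pm * Γm), Matrix.trace_mul_cycle sd.Pm Γm (sd.Pmᵀ * X),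
        Matrix.trace_mul_comm]
      rw [hPmXPm X, Matrix.mul_sub, Matrix.mul_one, Matrix.trace_sub]
    rw [h1, h2]
    ring
  have hmip : ∀ Y : Matrix (Fin n) (Fin n) ℝ, mip (grad Xs) Y = (grad Xs * Y).trace := by
    intro Y
    show ((grad Xs)ᵀ * Y).trace = _
    rw [hGsymm]
  -- block extraction lemmas
  set Sa := psqrt (sd.Vp Xs) with hSa
  set Sb := psqrt (sd.Vm Xs) with hSb
  set c := norm2 (grad Xs) with hc
  constructor
  · intro hopt
    -- test point
    set X₀ := sd.Pm * sd.Pmᵀ with hX₀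
    have hX₀psd : X₀.PosSemidef := by
      have := Matrix.posSemidef_self_mul_conjTranspose sd.Pm
      rwa [real_conjT] at this
    have hcomp : (1 : Matrix (Fin n) (Fin n) ℝ) - X₀ = sd.Pp * sd.Ppᵀ := by
      rw [hX₀, ← sd.hPPT]; abel
    have hX₀c : (1 - X₀).PosSemidef := by
      rw [hcomp]
      have := Matrix.posSemidef_self_mul_conjTranspose sd.Pp
      rwa [real_conjT] at this
    have hVp0 : sd.Vp X₀ = 0 := by
      show sd.Ppᵀ * (sd.Pm * sd.Pmᵀ) * sd.Pp = 0
      rw [← Matrix.mul_assoc, sd.hPpPm, Matrix.zero_mul, Matrix.zero_mul]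
    have hVm0 : sd.Vm X₀ = 0 := by
      show sd.Pmᵀ * (1 - X₀) * sd.Pm = 0
      rw [hcomp, ← Matrix.mul_assoc, hPmtPp, Matrix.zero_mul, Matrix.zero_mul]
    have h0 := hopt X₀ ⟨hX₀psd, hX₀c⟩
    rw [mip, hGsymm, Matrix.mul_sub, Matrix.trace_sub] at h0
    rw [trG X₀, trG Xs, hVp0, hVm0] at h0
    simp only [Matrix.mul_zero, Matrix.trace_zero] at h0
    have hge : 0 ≤ (Γp * sd.Vp Xs).trace := trace_psd_mul_nonneg hGppsd hApsd
    have hle : (Γm * sd.Vm Xs).trace ≤ 0 := by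
      have := trace_psd_mul_nonneg hNm hBpsd
      rw [hdiagneg, Matrix.neg_mul, Matrix.trace_neg] at this
      linarith
    have htrA : (Γp * sd.Vp Xs).trace = 0 := by linarith
    have htrB : (Γm * sd.Vm Xs).trace = 0 := by linarith
    -- A = 0
    have hA0 : sd.Vp Xs = 0 := by
      apply psd_trace_zero hApsd
      have hsum : ∑ i, sd.gp i * (sd.Vp Xs) i i = 0 := by
        rw [← trace_diag_mul, ← hΓp]; exact htrA
      have hzero : ∀ i ∈ Finset.univ, sd.gp i * (sd.Vp Xs) i i = 0 :=
        (Finset.sum_eq_zero_iff_of_nonneg fun i _ =>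
          mul_nonneg (sd.hgp_pos i).le (psd_diag_nonneg hApsd i)).mp hsum
      have hdiag : ∀ i, (sd.Vp Xs) i i = 0 := fun i => by
        have := hzero i (Finset.mem_univ i)
        rcases mul_eq_zero.mp this with h | h
        · exact absurd h (sd.hgp_pos i).ne'
        · exact h
      simp [Matrix.trace, Matrix.diag, hdiag]
    have hSa0 : Sa = 0 := by rw [hSa, hA0, psqrt_zero]
    have hXsPp : Xs * sd.Pp = 0 := mul_eq_zero_of_conj_zero hXpsd sd.Pp hA0
    have hPpXs : sd.Ppᵀ * Xs = 0 := by
      have hsym : Xsᵀ = Xs := by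
        have := hXpsd.isHermitian.eq
        rwa [real_conjT] at this
      have := congrArg Matrix.transpose hXsPp
      rwa [Matrix.transpose_mul, hsym, Matrix.transpose_zero] at this
    have hz2 : sd.Ppᵀ * Xs * sd.Pm = 0 := by rw [hPpXs, Matrix.zero_mul]
    have hz3 : sd.Pmᵀ * Xs * sd.Pp = 0 := by
      rw [Matrix.mul_assoc, hXsPp, Matrix.mul_zero]
    have hz4 : Sb * Γm * Sb = 0 := by
      have htr : ((Matrix.diagonal (-sd.gm)) * (Sb * Sb)).trace = 0 := by
        rw [hSb, psqrt_mul_self hBpsd, hdiagneg, Matrix.neg_mul, Matrix.trace_neg, htrB,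
          neg_zero]
      have := sandwich_zero (psqrt_psd hBpsd) hNm htr
      rw [hdiagneg, Matrix.mul_neg, Matrix.neg_mul, neg_eq_zero] at this
      exact this
    have hD0 : sd.Dmat Xs = 0 := by
      show sd.Pp * (Sa * Γp * Sa) * sd.Ppᵀ
          + c • (sd.Pp * (sd.Ppᵀ * Xs * sd.Pm) * sd.Pmᵀ)
          + c • (sd.Pm * (sd.Pmᵀ * Xs * sd.Pp) * sd.Ppᵀ)
          + sd.Pm * (Sb * Γm * Sb) * sd.Pmᵀ = 0
      rw [hSa0, hz2, hz3, hz4]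
      simp
    refine ⟨?_, hD0⟩
    rw [hD0]
    simp [fnorm, mip]
  · rintro ⟨-, hD⟩
    -- extract the diagonal blocks
    have e1 : sd.Ppᵀ * (sd.Pp * (Sa * Γp * Sa) * sd.Ppᵀ) * sd.Pp = Sa * Γp * Sa := by
      rw [mulmul3, sd.hPp_orth, Matrix.one_mul, Matrix.mul_one]
    have e2 : sd.Ppᵀ * (sd.Pp * (sd.Ppᵀ * Xs * sd.Pm) * sd.Pmᵀ) * sd.Pp = 0 := by
      rw [mulmul3, hPmtPp, Matrix.mul_zero]
    have e3 : sd.Ppᵀ * (sd.Pm * (sd.Pmᵀ * Xs * sd.Pp) * sd.Ppᵀ) * sd.Pp = 0 := by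
      rw [mulmul3, sd.hPpPm, Matrix.zero_mul, Matrix.zero_mul]
    have e4 : sd.Ppᵀ * (sd.Pm * (Sb * Γm * Sb) * sd.Pmᵀ) * sd.Pp = 0 := by
      rw [mulmul3, sd.hPpPm, Matrix.zero_mul, Matrix.zero_mul]
    have f1 : sd.Pmᵀ * (sd.Pp * (Sa * Γp * Sa) * sd.Ppᵀ) * sd.Pm = 0 := by
      rw [mulmul3, hPmtPp, Matrix.zero_mul, Matrix.zero_mul]
    have f2 : sd.Pmᵀ * (sd.Pp * (sd.Ppᵀ * Xs * sd.Pm) * sd.Pmᵀ) * sd.Pm = 0 := by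
      rw [mulmul3, hPmtPp, Matrix.zero_mul, Matrix.zero_mul]
    have f3 : sd.Pmᵀ * (sd.Pm * (sd.Pmᵀ * Xs * sd.Pp) * sd.Ppᵀ) * sd.Pm = 0 := by
      rw [mulmul3, sd.hPpPm, Matrix.mul_zero]
    have f4 : sd.Pmᵀ * (sd.Pm * (Sb * Γm * Sb) * sd.Pmᵀ) * sd.Pm = Sb * Γm * Sb := by
      rw [mulmul3, sd.hPm_orth, Matrix.one_mul, Matrix.mul_one]
    have hM11 : Sa * Γp * Sa = 0 := by
      have h := congrArg (fun M => sd.Ppᵀ * M * sd.Pp) hD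
      simp only [SpecDecomp.Dmat] at h
      rw [Matrix.mul_zero, Matrix.zero_mul] at h
      simp only [Matrix.mul_add, Matrix.add_mul, Matrix.mul_smul, Matrix.smul_mul] at h
      rw [e1, e2, e3, e4] at h
      simpa using h
    have hM22 : Sb * Γm * Sb = 0 := by
      have h := congrArg (fun M => sd.Pmᵀ * M * sd.Pm) hD
      simp only [SpecDecomp.Dmat] at h
      rw [Matrix.mul_zero, Matrix.zero_mul] at h
      simp only [Matrix.mul_add, Matrix.add_mul, Matrix.mul_smul, Matrix.smul_mul] at h
      rw [f1, f2, f3, f4] at h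
      simpa using h
    have htrA : (Γp * sd.Vp Xs).trace = 0 := by
      have : (Γp * (Sa * Sa)).trace = 0 := by
        rw [Matrix.trace_mul_comm Γp (Sa * Sa), Matrix.mul_assoc,
          Matrix.trace_mul_comm Sa (Sa * Γp), hM11, Matrix.trace_zero]
      rwa [hSa, psqrt_mul_self hApsd] at this
    have htrB : (Γm * sd.Vm Xs).trace = 0 := by
      have : (Γm * (Sb * Sb)).trace = 0 := by
        rw [Matrix.trace_mul_comm Γm (Sb * Sb), Matrix.mul_assoc,
          Matrix.trace_mul_comm Sb (Sb * Γm), hM22, Matrix.trace_zero]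
      rwa [hSb, psqrt_mul_self hBpsd] at this
    intro X hX
    rw [mip, hGsymm, Matrix.mul_sub, Matrix.trace_sub, trG X, trG Xs, htrA, htrB]
    have hge : 0 ≤ (Γp * sd.Vp X).trace := trace_psd_mul_nonneg hGppsd (hVpPsd X hX.1)
    have hle : (Γm * sd.Vm X).trace ≤ 0 := by
      have := trace_psd_mul_nonneg hNm (hVmPsd X hX.2)
      rw [hdiagneg, Matrix.neg_mul, Matrix.trace_neg] at this
      linarith
    linarith

end BoxSDP
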